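/- Let A be a commutative noetherian ring, I an ideal of A, S ⊆ A a multiplicative submonoid, and let A{S⁻¹} denote the (I·A_S)-adic completion of the localization A_S. Let M be an A-module each of whose elements is annihilated by some power of I. Then the natural map M ⊗_A A_S → M ⊗_A A{S⁻¹}, induced by the completion map A_S → A{S⁻¹}, is an isomorphism of A-modules. In particular, the localization M_S is naturally isomorphic to M ⊗_A A{S⁻¹}. -/

import Mathlib

/-- `A{S⁻¹}`: the completion of the localization `A_S` along (the extension of) the ideal
`I`, i.e. the `I·A_S`-adic completion of `Localization S`. -/
noncomputable abbrev CompletedLocalization (A : Type*) [CommRing A] (I : Ideal A)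
    (S : Submonoid A) :=
  AdicCompletion (Ideal.map (algebraMap A (Localization S)) I) (Localization S)

noncomputable instance (A : Type*) [CommRing A] (I : Ideal A) (S : Submonoid A) :
    Algebra A (CompletedLocalization A I S) :=
  ((algebraMap (Localization S) (CompletedLocalization A I S)).comp
    (algebraMap A (Localization S))).toAlgebra

instance (A : Type*) [CommRing A] (I : Ideal A) (S : Submonoid A) :
    IsScalarTower A (Localization S) (CompletedLocalization A I S) :=
  inferInstance

open AdicCompletion Submodule


open AdicCompletion Submodule

lemma smul_decomp {R : Type*} [CommRing R] {s : ℕ} (a : Fin s → R) (N : Submodule R R)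
    {x : R} (hx : x ∈ (Submodule.span R (Set.range a) : Ideal R) • N) :
    ∃ c : Fin s → R, (∀ i, c i ∈ N) ∧ x = ∑ i, a i * c i := by
  refine Submodule.smul_induction_on hx ?_ ?_
  · intro r hr z hz
    obtain ⟨t, ht⟩ := (mem_span_range_iff_exists_fun R).mp hr
    refine ⟨fun i => t i * z, fun i => N.smul_mem _ hz, ?_⟩
    rw [← ht, Finset.sum_smul]
    simp only [smul_eq_mul]
    exact Finset.sum_congr rfl (fun i _ => by ring)
  · rintro x y ⟨c1, hc1, rfl⟩ ⟨c2, hc2, rfl⟩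
    exact ⟨c1 + c2, fun i => N.add_mem (hc1 i) (hc2 i),
      by simp [mul_add, Finset.sum_add_distrib]⟩

lemma ideal_smul_top_self {R : Type*} [CommRing R] (K : Ideal R) :
    (K • ⊤ : Submodule R R) = K := by
  rw [smul_eq_mul, Ideal.mul_top]

lemma ker_eval_le {R : Type*} [CommRing R] (I : Ideal R) (n : ℕ) (hfg : (I ^ n).FG)
    (x : AdicCompletion I R) (hx : eval I R n x = 0) :
    x ∈ ((I ^ n : Ideal R) • ⊤ : Submodule R (AdicCompletion I R)) := by
  obtain ⟨s, a, hspan⟩ := Submodule.fg_iff_exists_fin_generating_family.mp hfg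
  obtain ⟨F, rfl⟩ := mk_surjective I R x
  have hFn : F n ∈ (span R (Set.range a) • (⊤ : Submodule R R)) := by
    rw [ideal_smul_top_self, hspan]
    have h0 : Submodule.Quotient.mk (p := (I ^ n • ⊤ : Submodule R R)) (F n) = 0 := hx
    rw [Submodule.Quotient.mk_eq_zero, ideal_smul_top_self] at h0
    exact h0
  -- choose decomposition of successive differences
  have hdiff : ∀ k : ℕ, F (n + k + 1) - F (n + k) ∈
      (span R (Set.range a) • ((I ^ k : Ideal R) • (⊤ : Submodule R R))) := by
    intro k
    have h1 : F (n + k + 1) - F (n + k) ∈ (I ^ (n + k) • ⊤ : Submodule R R) := by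
      have h2 := AdicCauchySequence.mk_eq_mk (Nat.le_succ (n + k)) F
      rw [eq_comm, Submodule.Quotient.eq] at h2
      simpa [neg_sub] using neg_mem h2
    rw [hspan]
    rwa [pow_add, ← smul_eq_mul, Submodule.smul_assoc] at h1
  choose c hcmem hcsum using fun k => smul_decomp a _ (hdiff k)
  obtain ⟨c0, -, hc0⟩ := smul_decomp a ⊤ hFn
  -- partial sums
  set G : ℕ → Fin s → R := fun k => c0 + ∑ j ∈ Finset.range k, c j with hG
  have hGsum : ∀ k, ∑ i, a i * G k i = F (n + k) := by
    intro k
    induction k with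
    | zero => simpa [hG] using hc0.symm
    | succ k ih =>
      have hGk : ∀ i, G (k + 1) i = G k i + c k i := by
        intro i
        simp only [hG, Pi.add_apply, Finset.sum_apply, Finset.sum_range_succ]
        ring
      simp only [hGk, mul_add, Finset.sum_add_distrib, ih]
      have hnk : n + (k + 1) = n + k + 1 := rfl
      rw [hnk]
      linear_combination -hcsum k
  have hGc : ∀ i, IsAdicCauchy I R (fun k => G k i) := by
    intro i
    rw [isAdicCauchy_iff]
    intro k
    rw [SModEq.def, Submodule.Quotient.eq]
    have hGk : G k i - G (k + 1) i = -(c k i) := by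
      simp only [hG, Pi.add_apply, Finset.sum_apply, Finset.sum_range_succ]
      ring
    rw [hGk]
    exact neg_mem (hcmem k i)
  -- assemble
  set y : Fin s → AdicCompletion I R :=
    fun i => AdicCompletion.mk I R (AdicCauchySequence.mk I R (fun k => G k i) (by
      intro k
      exact (isAdicCauchy_iff I R (fun k => G k i)).mp (hGc i) k)) with hy
  have hxy : AdicCompletion.mk I R F = ∑ i, a i • y i := by
    ext k
    rw [val_sum]
    have h2 : ∀ i, ((a i • y i).val k) =
        Submodule.mkQ (I ^ k • ⊤ : Submodule R R) (a i * G k i) := by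
      intro i
      rw [val_smul]
      rfl
    rw [Finset.sum_apply, Finset.sum_congr rfl (fun i _ => h2 i), ← map_sum, hGsum k]
    exact (AdicCauchySequence.mk_eq_mk (Nat.le_add_left k n) F).symm
  rw [hxy]
  refine Submodule.sum_mem _ (fun i _ => Submodule.smul_mem_smul ?_ trivial)
  rw [← hspan]
  exact Submodule.subset_span (Set.mem_range_self i)

section Tower

variable {A B C : Type*} [CommRing A] [CommRing B] [CommRing C]
  [Algebra A B] [Algebra B C] [Algebra A C] [IsScalarTower A B C]

/-- For a tower `A → B → C`, the `B`-span of the extension of `K : Ideal A` to `C`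
is contained in the `A`-span. -/
lemma map_smul_top_le (K : Ideal A) {x : C}
    (hx : x ∈ ((K.map (algebraMap A B) : Ideal B) • ⊤ : Submodule B C)) :
    x ∈ (K • ⊤ : Submodule A C) := by
  have key : ∀ j ∈ K.map (algebraMap A B), ∀ z : C, j • z ∈ (K • ⊤ : Submodule A C) := by
    intro j hj
    induction hj using Submodule.span_induction with
    | mem b hb =>
      obtain ⟨a, ha, rfl⟩ := hb
      intro z
      rw [algebraMap_smul]
      exact Submodule.smul_mem_smul ha trivial
    | zero => intro z; rw [zero_smul]; exact Submodule.zero_mem _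
    | add j₁ j₂ _ _ h1 h2 =>
      intro z
      rw [add_smul]; exact Submodule.add_mem _ (h1 z) (h2 z)
    | smul b j _ h =>
      intro z
      rw [smul_eq_mul, mul_comm, mul_smul]
      exact h (b • z)
  exact Submodule.smul_induction_on hx (fun j hj z _ => key j hj z)
    (fun x y hx hy => Submodule.add_mem _ hx hy)

/-- Conversely, the `A`-span is contained in the `B`-span. -/
lemma smul_top_le_map (K : Ideal A) {x : C}
    (hx : x ∈ (K • ⊤ : Submodule A C)) :
    x ∈ ((K.map (algebraMap A B) : Ideal B) • ⊤ : Submodule B C) := by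
  refine Submodule.smul_induction_on hx ?_ (fun x y hx hy => Submodule.add_mem _ hx hy)
  intro a ha z _
  rw [← algebraMap_smul B a z]
  exact Submodule.smul_mem_smul (Ideal.mem_map_of_mem _ ha) trivial

end Tower

/-- Easy direction: `Iⁿ • ⊤` is contained in the kernel of `eval n`. -/
lemma smul_top_le_ker_eval {R : Type*} [CommRing R] (I : Ideal R) (n : ℕ)
    {x : AdicCompletion I R}
    (hx : x ∈ ((I ^ n : Ideal R) • ⊤ : Submodule R (AdicCompletion I R))) :
    AdicCompletion.eval I R n x = 0 := by
  refine Submodule.smul_induction_on hx ?_ ?_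
  · intro a ha y _
    rw [map_smul]
    obtain ⟨z, hz⟩ := Submodule.Quotient.mk_surjective _ (AdicCompletion.eval I R n y)
    rw [← hz, ← Submodule.Quotient.mk_smul, Submodule.Quotient.mk_eq_zero]
    exact Submodule.smul_mem_smul ha trivial
  · intro x y hx hy
    rw [map_add, hx, hy, add_zero]

open TensorProduct LinearMap in
/-- If every element of `N` is killed by `K`, then tensoring `N` with the quotient map
`X → X / (K • ⊤)` is bijective. -/
lemma lTensor_mkQ_bijective {R : Type*} [CommRing R] (K : Ideal R)
    (N : Type*) [AddCommGroup N] [Module R N] (hN : ∀ a ∈ K, ∀ x : N, a • x = 0)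
    (X : Type*) [AddCommGroup X] [Module R X] :
    Function.Bijective (lTensor N (K • ⊤ : Submodule R X).mkQ) := by
  constructor
  · rw [← LinearMap.ker_eq_bot]
    have hexact : Function.Exact (lTensor N (K • ⊤ : Submodule R X).subtype)
        (lTensor N (K • ⊤ : Submodule R X).mkQ) :=
      lTensor_exact N (LinearMap.exact_subtype_mkQ _) (Submodule.mkQ_surjective _)
    rw [hexact.linearMap_ker_eq]
    have hzero : lTensor N (K • ⊤ : Submodule R X).subtype = 0 := by
      apply TensorProduct.ext'
      intro m y
      have : ∀ z ∈ (K • ⊤ : Submodule R X), (m ⊗ₜ[R] z : N ⊗[R] X) = 0 := by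
        intro z hz
        refine Submodule.smul_induction_on hz ?_ ?_
        · intro a ha w _
          rw [tmul_smul, smul_tmul', hN a ha m, zero_tmul]
        · intro z w hzz hww
          rw [tmul_add, hzz, hww, add_zero]
      simpa using this y.1 y.2
    rw [hzero, LinearMap.range_zero]
  · exact LinearMap.lTensor_surjective N (Submodule.mkQ_surjective _)

open TensorProduct LinearMap in
/-- `lTensor` with a bijective map is bijective. -/
lemma lTensor_bijective_of_bijective {R : Type*} [CommRing R]
    (N : Type*) [AddCommGroup N] [Module R N]
    {X Y : Type*} [AddCommGroup X] [AddCommGroup Y] [Module R X] [Module R Y]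
    (g : X →ₗ[R] Y) (hg : Function.Bijective g) :
    Function.Bijective (lTensor N g) := by
  let e := LinearEquiv.ofBijective g hg
  rw [Function.bijective_iff_has_inverse]
  refine ⟨lTensor N (e.symm : Y →ₗ[R] X), ?_, ?_⟩
  · intro x
    rw [← LinearMap.comp_apply, ← lTensor_comp]
    have : ((e.symm : Y →ₗ[R] X) ∘ₗ g) = LinearMap.id := by
      ext z; exact e.symm_apply_apply z
    rw [this, lTensor_id, LinearMap.id_apply]
  · intro y
    rw [← LinearMap.comp_apply, ← lTensor_comp]
    have : (g ∘ₗ (e.symm : Y →ₗ[R] X)) = LinearMap.id := by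
      ext z; exact e.apply_symm_apply z
    rw [this, lTensor_id, LinearMap.id_apply]

lemma bijective_of_comp {X Y Z : Type*} {f : X → Y} {g : Y → Z}
    (hgf : Function.Bijective (g ∘ f)) (hg : Function.Bijective g) :
    Function.Bijective f := by
  refine ⟨fun a b hab => hgf.1 (by simp [Function.comp, hab]), fun y => ?_⟩
  obtain ⟨x, hx⟩ := hgf.2 (g y)
  exact ⟨x, hg.1 hx⟩
section Main

variable (A : Type*) [CommRing A] [IsNoetherianRing A] (I : Ideal A) (S : Submonoid A)

open TensorProduct LinearMap

/-- The completion map `A_S → A{S⁻¹}`, `A`-linearly. -/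
noncomputable def complMap : Localization S →ₗ[A] CompletedLocalization A I S :=
  (Algebra.linearMap (Localization S) (CompletedLocalization A I S)).restrictScalars A

lemma complMap_apply (b : Localization S) :
    complMap A I S b =
      AdicCompletion.of (Ideal.map (algebraMap A (Localization S)) I) (Localization S) b := rfl

variable (n : ℕ)

lemma memB_iff (b : Localization S) :
    b ∈ ((I ^ n : Ideal A) • ⊤ : Submodule A (Localization S)) ↔
      b ∈ (((Ideal.map (algebraMap A (Localization S)) I) ^ n : Ideal (Localization S)) • ⊤ :
        Submodule (Localization S) (Localization S)) := by
  rw [← Ideal.map_pow]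
  exact ⟨fun h => smul_top_le_map (I ^ n) h, fun h => map_smul_top_le (I ^ n) h⟩

lemma memC_iff (c : CompletedLocalization A I S) :
    c ∈ ((I ^ n : Ideal A) • ⊤ : Submodule A (CompletedLocalization A I S)) ↔
      AdicCompletion.eval (Ideal.map (algebraMap A (Localization S)) I) (Localization S) n c
        = 0 := by
  haveI : IsNoetherianRing (Localization S) :=
    IsLocalization.isNoetherianRing S (Localization S) inferInstance
  constructor
  · intro h
    refine smul_top_le_ker_eval _ n ?_
    rw [← Ideal.map_pow]
    exact @smul_top_le_map A (Localization S) (CompletedLocalization A I S) _ _ _ _ _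
      (AdicCompletion.instAlgebra _) _ (I ^ n) c h
  · intro h
    have := ker_eval_le (Ideal.map (algebraMap A (Localization S)) I) n
      (IsNoetherian.noetherian _) c h
    rw [← Ideal.map_pow] at this
    exact @map_smul_top_le A (Localization S) (CompletedLocalization A I S) _ _ _ _ _
      (AdicCompletion.instAlgebra _) _ (I ^ n) c this

lemma complMap_comap :
    ((I ^ n : Ideal A) • ⊤ : Submodule A (Localization S)) ≤
      Submodule.comap (complMap A I S)
        ((I ^ n : Ideal A) • ⊤ : Submodule A (CompletedLocalization A I S)) := by
  rw [← Submodule.map_le_iff_le_comap, Submodule.map_smul'']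
  exact smul_mono_right (I ^ n) le_top

/-- The induced map on quotients mod `Iⁿ` is bijective. -/
lemma complMap_quot_bijective :
    Function.Bijective (Submodule.mapQ _ _ (complMap A I S) (complMap_comap A I S n)) := by
  constructor
  · rw [← LinearMap.ker_eq_bot, eq_bot_iff]
    intro q hq
    obtain ⟨b, rfl⟩ := Submodule.mkQ_surjective _ q
    rw [LinearMap.mem_ker, Submodule.mkQ_apply, Submodule.mapQ_apply,
      Submodule.Quotient.mk_eq_zero] at hq
    rw [Submodule.mem_bot, Submodule.mkQ_apply, Submodule.Quotient.mk_eq_zero]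
    rw [memC_iff] at hq
    rw [complMap_apply, AdicCompletion.eval_of] at hq
    rw [memB_iff]
    rw [Submodule.mkQ_apply] at hq
    exact (Submodule.Quotient.mk_eq_zero _).mp hq
  · intro q
    obtain ⟨c, rfl⟩ := Submodule.mkQ_surjective _ q
    obtain ⟨b, hb⟩ := Submodule.Quotient.mk_surjective _
      (AdicCompletion.eval (Ideal.map (algebraMap A (Localization S)) I) (Localization S) n c)
    refine ⟨Submodule.mkQ _ b, ?_⟩
    rw [Submodule.mkQ_apply, Submodule.mapQ_apply, Submodule.mkQ_apply, Submodule.Quotient.eq]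
    rw [memC_iff, map_sub, complMap_apply, AdicCompletion.eval_of, Submodule.mkQ_apply, hb,
      sub_self]

/-- Main step: if `N` is uniformly killed by `Iⁿ`, then `N ⊗ complMap` is bijective. -/
lemma lTensor_complMap_bijective (N : Type*) [AddCommGroup N] [Module A N]
    (hN : ∀ a ∈ (I ^ n : Ideal A), ∀ x : N, a • x = 0) :
    Function.Bijective (lTensor N (complMap A I S)) := by
  set qB := ((I ^ n : Ideal A) • ⊤ : Submodule A (Localization S)).mkQ
  set qC := ((I ^ n : Ideal A) • ⊤ : Submodule A (CompletedLocalization A I S)).mkQ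
  set fbar := Submodule.mapQ _ _ (complMap A I S) (complMap_comap A I S n)
  have hsquare : qC ∘ₗ complMap A I S = fbar ∘ₗ qB := by
    ext b
    simp [qB, qC, fbar, Submodule.mapQ_apply]
  have h1 : Function.Bijective (lTensor N qB) := lTensor_mkQ_bijective _ N hN _
  have h2 : Function.Bijective (lTensor N qC) := lTensor_mkQ_bijective _ N hN _
  have h3 : Function.Bijective (lTensor N fbar) :=
    lTensor_bijective_of_bijective N _ (complMap_quot_bijective A I S n)
  have hcomp : (lTensor N qC) ∘ₗ (lTensor N (complMap A I S)) =
      (lTensor N fbar) ∘ₗ (lTensor N qB) := by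
    rw [← lTensor_comp, ← lTensor_comp, hsquare]
  have : Function.Bijective ((lTensor N qC) ∘ (lTensor N (complMap A I S))) := by
    have : (lTensor N qC) ∘ (lTensor N (complMap A I S)) =
        (lTensor N fbar) ∘ (lTensor N qB) := by
      ext x; exact congrArg (fun g => g x) (congrArg DFunLike.coe hcomp)
    rw [this]
    exact (h3.comp h1)
  exact bijective_of_comp this h2

end Main

open TensorProduct LinearMap

/-- For a noetherian ring `A`, an ideal `I`, a multiplicative set `S`, and an
`A`-module `M` all of whose elements are killed by a power of `I`, the natural map
`M ⊗_A A_S → M ⊗_A A{S⁻¹}` induced by the completion map `A_S → A{S⁻¹}` is an isomorphism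
of `A`-modules.  (In particular `M_S ≅ M ⊗_A A{S⁻¹}`.) -/
theorem stmt_13 (A : Type*) [CommRing A] [IsNoetherianRing A] (I : Ideal A)
    (S : Submonoid A) (M : Type*) [AddCommGroup M] [Module A M]
    (htor : ∀ x : M, ∃ n : ℕ, ∀ a ∈ I ^ n, a • x = 0) :
    Function.Bijective
      (LinearMap.lTensor M
        ((Algebra.linearMap (Localization S)
          (CompletedLocalization A I S)).restrictScalars A)) := by
  classical
  haveI : IsNoetherianRing (Localization S) :=
    IsLocalization.isNoetherianRing S (Localization S) inferInstance
  haveI hflatBC : Module.Flat (Localization S) (CompletedLocalization A I S) :=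
    inferInstance
  haveI hflatAC : Module.Flat A (CompletedLocalization A I S) :=
    Module.Flat.trans A (Localization S) (CompletedLocalization A I S)
  show Function.Bijective (lTensor M (complMap A I S))
  -- torsion submodules
  set Mn : ℕ → Submodule A M := fun n =>
    { carrier := {x | ∀ a ∈ (I ^ n : Ideal A), a • x = 0}
      add_mem' := fun hx hy a ha => by rw [smul_add, hx a ha, hy a ha, add_zero]
      zero_mem' := fun a _ => smul_zero a
      smul_mem' := fun r x hx a ha => by rw [smul_comm, hx a ha, smul_zero] } with hMn
  have hkilled : ∀ n, ∀ a ∈ (I ^ n : Ideal A), ∀ x : (Mn n), a • x = 0 := by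
    intro n a ha x
    exact Subtype.ext (x.2 a ha)
  choose nx hnx using htor
  have hnat : ∀ n : ℕ, (lTensor M (complMap A I S)) ∘ₗ
      (rTensor (Localization S) (Mn n).subtype) =
      (rTensor (CompletedLocalization A I S) (Mn n).subtype) ∘ₗ
        (lTensor (Mn n) (complMap A I S)) := by
    intro n
    rw [lTensor_comp_rTensor, rTensor_comp_lTensor]
  constructor
  · -- injectivity
    rw [← LinearMap.ker_eq_bot, eq_bot_iff]
    intro x hx
    rw [LinearMap.mem_ker] at hx
    obtain ⟨T, rfl⟩ := TensorProduct.exists_finset x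
    set n : ℕ := T.sup fun p => nx p.1 with hn
    have hmem : ∀ p ∈ T, p.1 ∈ Mn n := by
      intro p hp a ha
      exact hnx p.1 a (Ideal.pow_le_pow_right (Finset.le_sup hp) ha)
    set y : (Mn n) ⊗[A] Localization S :=
      ∑ p ∈ T.attach, (⟨p.1.1, hmem p.1 p.2⟩ : Mn n) ⊗ₜ[A] p.1.2 with hy
    have hyx : rTensor (Localization S) (Mn n).subtype y = ∑ p ∈ T, p.1 ⊗ₜ[A] p.2 := by
      rw [hy, map_sum, ← Finset.sum_attach T (fun p => p.1 ⊗ₜ[A] p.2)]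
      rfl
    have h0 : rTensor (CompletedLocalization A I S) (Mn n).subtype
        (lTensor (Mn n) (complMap A I S) y) = 0 := by
      rw [← LinearMap.comp_apply, ← hnat n, LinearMap.comp_apply, hyx, hx]
    have hrinj : Function.Injective
        (rTensor (CompletedLocalization A I S) (Mn n).subtype) :=
      Module.Flat.rTensor_preserves_injective_linearMap _ (Submodule.injective_subtype _)
    have hltz : lTensor (Mn n) (complMap A I S) y = 0 :=
      hrinj (by rw [h0, (rTensor (CompletedLocalization A I S) (Mn n).subtype).map_zero])
    have hy0 : y = 0 := (lTensor_complMap_bijective A I S n (Mn n) (hkilled n)).1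
      (by rw [hltz, (lTensor (Mn n) (complMap A I S)).map_zero])
    rw [Submodule.mem_bot, ← hyx, hy0,
      (rTensor (Localization S) (Mn n).subtype).map_zero]
  · -- surjectivity
    intro z
    obtain ⟨T, rfl⟩ := TensorProduct.exists_finset z
    have hsum : ∀ p ∈ T, (p.1 ⊗ₜ[A] p.2 : M ⊗[A] CompletedLocalization A I S) ∈
        LinearMap.range (lTensor M (complMap A I S)) := by
      intro p _
      set n := nx p.1
      have hmem : p.1 ∈ Mn n := fun a ha => hnx p.1 a ha
      obtain ⟨w, hw⟩ := (lTensor_complMap_bijective A I S n (Mn n) (hkilled n)).2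
        ((⟨p.1, hmem⟩ : Mn n) ⊗ₜ[A] p.2)
      refine ⟨rTensor (Localization S) (Mn n).subtype w, ?_⟩
      rw [← LinearMap.comp_apply, hnat n, LinearMap.comp_apply, hw]
      rfl
    obtain ⟨x, hx⟩ := Submodule.sum_mem _ hsum
    exact ⟨x, hx⟩
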